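/- arXiv:1305.4474 — 2 statements merged into one kernel-verified Lean document; each statement's English description precedes it below -/
import Mathlib

section
/- Let char F = 2 and 1 ≤ k ≤ n. Then W̄^sp_k ⊆ W_k°, i.e. the span of the decomposable vectors of totally isotropic k-subspaces of (V̄, ς), regarded inside ⋀^k V via the inclusion V̄ ⊆ V, is contained in the span of the decomposable vectors of totally singular k-subspaces of (V, η). -/
open ExteriorAlgebra

noncomputable section

/-- The quadratic form `η(x) = Σ_{i=1}^n x_i x_{n+i} + x_{2n+1}²` on `F^{2n+1}`
(indices written 0-based). -/
def eta (F : Type) [Field F] (n : ℕ) (x : Fin (2 * n + 1) → F) : F :=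
  (∑ i : Fin n, x ⟨i.1, by have := i.2; omega⟩ * x ⟨n + i.1, by have := i.2; omega⟩)
    + x ⟨2 * n, by omega⟩ ^ 2

/-- `W_k°`: the span of the decomposable vectors `v_1 ∧ ⋯ ∧ v_k` where `v_1, …, v_k` is a
basis of a totally singular `k`-dimensional subspace of `F^{2n+1}`. -/
def Wcirc (F : Type) [Field F] (n k : ℕ) :
    Submodule F (ExteriorAlgebra F (Fin (2 * n + 1) → F)) :=
  Submodule.span F {w | ∃ v : Fin k → (Fin (2 * n + 1) → F),
    LinearIndependent F v ∧
    (∀ x ∈ Submodule.span F (Set.range v), eta F n x = 0) ∧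
    w = ExteriorAlgebra.ιMulti F k v}

/-- The alternating form `ς(x,y) = Σ_{i=1}^n (x_i y_{n+i} − x_{n+i} y_i)` on `F^{2n}`
(indices written 0-based). -/
def zeta (F : Type) [Field F] (n : ℕ) (x y : Fin (2 * n) → F) : F :=
  ∑ i : Fin n, (x ⟨i.1, by have := i.2; omega⟩ * y ⟨n + i.1, by have := i.2; omega⟩
    - x ⟨n + i.1, by have := i.2; omega⟩ * y ⟨i.1, by have := i.2; omega⟩)

/-- `W̄^sp_j`: the span of the decomposable vectors `v_1 ∧ ⋯ ∧ v_j` where `v_1, …, v_j` is a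
basis of a totally isotropic `j`-dimensional subspace of `F^{2n}`. -/
def Wsp (F : Type) [Field F] (n j : ℕ) :
    Submodule F (ExteriorAlgebra F (Fin (2 * n) → F)) :=
  Submodule.span F {w | ∃ v : Fin j → (Fin (2 * n) → F),
    LinearIndependent F v ∧
    (∀ x ∈ Submodule.span F (Set.range v), ∀ y ∈ Submodule.span F (Set.range v),
      zeta F n x y = 0) ∧
    w = ExteriorAlgebra.ιMulti F j v}

/-- The inclusion `V̄ = F^{2n} ↪ V = F^{2n+1}` (extension by zero on the last coordinate). -/
def incl (F : Type) [Field F] (n : ℕ) : (Fin (2 * n) → F) →ₗ[F] (Fin (2 * n + 1) → F) :=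
  Function.ExtendByZero.linearMap F (Fin.castLE (by omega))

namespace Stmt3Aux

variable (F : Type) [Field F] (n : ℕ)

def il (i : Fin n) : Fin (2 * n) := ⟨i.1, by have := i.2; omega⟩
def ir (i : Fin n) : Fin (2 * n) := ⟨n + i.1, by have := i.2; omega⟩

def qbar (x : Fin (2 * n) → F) : F := ∑ i : Fin n, x (il n i) * x (ir n i)

variable {F n}

lemma zeta_eq (x y : Fin (2 * n) → F) :
    zeta F n x y = ∑ i : Fin n, (x (il n i) * y (ir n i) - x (ir n i) * y (il n i)) := rfl

lemma il_ne_ir (i j : Fin n) : il n i ≠ ir n j := by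
  simp only [il, ir, ne_eq, Fin.mk.injEq]; have := i.2; omega

lemma il_inj {i j : Fin n} (h : il n i = il n j) : i = j := by
  simpa only [il, Fin.ext_iff] using h

lemma ir_inj {i j : Fin n} (h : ir n i = ir n j) : i = j := by
  simp only [ir, Fin.ext_iff] at h ⊢; omega

lemma zeta_add_left (x x' y : Fin (2 * n) → F) :
    zeta F n (x + x') y = zeta F n x y + zeta F n x' y := by
  simp only [zeta_eq, Pi.add_apply, ← Finset.sum_add_distrib]
  exact Finset.sum_congr rfl fun i _ => by ring

lemma zeta_smul_left (c : F) (x y : Fin (2 * n) → F) :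
    zeta F n (c • x) y = c * zeta F n x y := by
  simp only [zeta_eq, Pi.smul_apply, smul_eq_mul, Finset.mul_sum]
  exact Finset.sum_congr rfl fun i _ => by ring

lemma zeta_add_right (x y y' : Fin (2 * n) → F) :
    zeta F n x (y + y') = zeta F n x y + zeta F n x y' := by
  simp only [zeta_eq, Pi.add_apply, ← Finset.sum_add_distrib]
  exact Finset.sum_congr rfl fun i _ => by ring

lemma zeta_smul_right (c : F) (x y : Fin (2 * n) → F) :
    zeta F n x (c • y) = c * zeta F n x y := by
  simp only [zeta_eq, Pi.smul_apply, smul_eq_mul, Finset.mul_sum]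
  exact Finset.sum_congr rfl fun i _ => by ring

variable (F n) in
def zb : (Fin (2 * n) → F) →ₗ[F] (Fin (2 * n) → F) →ₗ[F] F :=
  LinearMap.mk₂ F (zeta F n) zeta_add_left zeta_smul_left zeta_add_right zeta_smul_right

@[simp] lemma zb_apply (x y : Fin (2 * n) → F) : zb F n x y = zeta F n x y := rfl

lemma zeta_self (x : Fin (2 * n) → F) : zeta F n x x = 0 := by
  rw [zeta_eq]; exact Finset.sum_eq_zero fun i _ => by ring

lemma qbar_zero : qbar F n 0 = 0 := by simp [qbar]

section Char2
variable [CharP F 2]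

lemma zeta_comm (x y : Fin (2 * n) → F) : zeta F n x y = zeta F n y x := by
  simp only [zeta_eq, CharTwo.sub_eq_add]
  exact Finset.sum_congr rfl fun i _ => by ring

lemma qbar_polar (x y : Fin (2 * n) → F) :
    qbar F n (x + y) = qbar F n x + qbar F n y + zeta F n x y := by
  simp only [qbar, zeta_eq, Pi.add_apply, CharTwo.sub_eq_add, ← Finset.sum_add_distrib]
  exact Finset.sum_congr rfl fun i _ => by ring

lemma zeta_eq_qbar_sub (x y : Fin (2 * n) → F) :
    zeta F n x y = qbar F n (x + y) - qbar F n x - qbar F n y := by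
  rw [qbar_polar]; ring

end Char2

lemma qbar_smul (c : F) (x : Fin (2 * n) → F) : qbar F n (c • x) = c ^ 2 * qbar F n x := by
  simp only [qbar, Pi.smul_apply, smul_eq_mul, Finset.mul_sum]
  exact Finset.sum_congr rfl fun i _ => by ring

lemma zeta_single_il (i : Fin n) (c : F) (y : Fin (2 * n) → F) :
    zeta F n (Pi.single (il n i) c) y = c * y (ir n i) := by
  rw [zeta_eq]
  have h : ∀ j : Fin n, ((Pi.single (il n i) c : Fin (2 * n) → F) (il n j) * y (ir n j)
      - (Pi.single (il n i) c : Fin (2 * n) → F) (ir n j) * y (il n j))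
      = if j = i then c * y (ir n i) else 0 := by
    intro j
    simp only [Pi.single_apply]
    rcases eq_or_ne j i with rfl | hji
    · rw [if_pos rfl, if_neg (fun h => il_ne_ir j j h.symm), if_pos rfl]
      ring
    · rw [if_neg (fun h => hji (il_inj h)), if_neg (fun h => il_ne_ir i j h.symm),
        if_neg hji]
      ring
  rw [Finset.sum_congr rfl fun j _ => h j, Finset.sum_ite_eq' Finset.univ i
    (fun _ => c * y (ir n i))]
  simp

lemma zeta_single_ir (i : Fin n) (c : F) (y : Fin (2 * n) → F) :
    zeta F n (Pi.single (ir n i) c) y = -(c * y (il n i)) := by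
  rw [zeta_eq]
  have h : ∀ j : Fin n, ((Pi.single (ir n i) c : Fin (2 * n) → F) (il n j) * y (ir n j)
      - (Pi.single (ir n i) c : Fin (2 * n) → F) (ir n j) * y (il n j))
      = if j = i then -(c * y (il n i)) else 0 := by
    intro j
    simp only [Pi.single_apply]
    rcases eq_or_ne j i with rfl | hji
    · rw [if_neg (il_ne_ir j j), if_pos rfl, if_pos rfl]
      ring
    · rw [if_neg (il_ne_ir j i), if_neg (fun h => hji (ir_inj h)), if_neg hji]
      ring
  rw [Finset.sum_congr rfl fun j _ => h j, Finset.sum_ite_eq' Finset.univ i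
    (fun _ => -(c * y (il n i)))]
  simp

lemma qbar_single (t : Fin (2 * n)) (c : F) : qbar F n (Pi.single t c) = 0 := by
  refine Finset.sum_eq_zero fun i _ => ?_
  simp only [Pi.single_apply]
  split_ifs with h1 h2 h2
  · exact absurd (h1.trans h2.symm) (il_ne_ir i i)
  · ring
  · ring
  · ring


section Part2

variable {F : Type} [Field F] {n : ℕ}

open Submodule in
lemma zeta_span_zero (s : Set (Fin (2 * n) → F))
    (h : ∀ x ∈ s, ∀ y ∈ s, zeta F n x y = 0) :
    ∀ x ∈ Submodule.span F s, ∀ y ∈ Submodule.span F s, zeta F n x y = 0 := by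
  have h1 : ∀ x ∈ s, ∀ y ∈ Submodule.span F s, zeta F n x y = 0 := by
    intro x hx y hy
    have : Submodule.span F s ≤ LinearMap.ker (zb F n x) :=
      Submodule.span_le.mpr fun y' hy' => by simpa using h x hx y' hy'
    simpa using this hy
  intro x hx y hy
  have : Submodule.span F s ≤ LinearMap.ker ((zb F n).flip y) :=
    Submodule.span_le.mpr fun x' hx' => by simpa using h1 x' hx' y hy
  simpa using this hx

variable [CharP F 2]

lemma qbar_sum_zero {k : ℕ} (w : Fin k → (Fin (2 * n) → F)) (a : Fin k → F)
    (h0 : ∀ i, qbar F n (w i) = 0) (h1 : ∀ i j, zeta F n (w i) (w j) = 0)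
    (s : Finset (Fin k)) : qbar F n (∑ i ∈ s, a i • w i) = 0 := by
  classical
  induction s using Finset.induction with
  | empty => simpa using qbar_zero (F := F) (n := n)
  | @insert j s hj ih =>
    rw [Finset.sum_insert hj, qbar_polar, qbar_smul, h0, ih]
    have hz : zeta F n (a j • w j) (∑ i ∈ s, a i • w i) = 0 := by
      rw [zeta_smul_left]
      have hsum : zb F n (w j) (∑ i ∈ s, a i • w i) = ∑ i ∈ s, a i * zeta F n (w j) (w i) := by
        rw [map_sum]
        exact Finset.sum_congr rfl fun i _ => by rw [map_smul, smul_eq_mul, zb_apply]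
      rw [← zb_apply, hsum, Finset.sum_eq_zero fun i _ => by rw [h1 j i, mul_zero], mul_zero]
    rw [hz]; ring

lemma qbar_span_zero {k : ℕ} (w : Fin k → (Fin (2 * n) → F))
    (h0 : ∀ i, qbar F n (w i) = 0) (h1 : ∀ i j, zeta F n (w i) (w j) = 0) :
    ∀ x ∈ Submodule.span F (Set.range w), qbar F n x = 0 := by
  intro x hx
  obtain ⟨c, rfl⟩ := (Submodule.mem_span_range_iff_exists_fun F).mp hx
  exact qbar_sum_zero w c h0 h1 Finset.univ

variable (F n) in
def M0 : Submodule F (Fin (2 * n) → F) where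
  carrier := {x | ∀ i : Fin n, x (il n i) = 0}
  add_mem' := fun ha hb i => by simp [ha i, hb i]
  zero_mem' := fun i => rfl
  smul_mem' := fun c x hx i => by simp [hx i]

lemma single_ir_mem_M0 (i : Fin n) (c : F) : (Pi.single (ir n i) c : Fin (2 * n) → F) ∈ M0 F n := by
  intro j
  simp only [Pi.single_apply]
  rw [if_neg (il_ne_ir j i)]

lemma lemD (l : List (Fin (2 * n) → F))
    (hl : ∀ x ∈ l, ∀ y ∈ l, zeta F n x y = 0) :
    ∃ M : Submodule F (Fin (2 * n) → F),
      (∀ x ∈ M, qbar F n x = 0) ∧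
      (∀ x, (∀ m ∈ M, zeta F n x m = 0) → x ∈ M) ∧
      (∀ x ∈ Submodule.span F {y | y ∈ l}, x ∈ M → x = 0) := by
  induction l with
  | nil =>
    refine ⟨M0 F n, fun x hx => Finset.sum_eq_zero fun i _ => by rw [hx i, zero_mul],
      fun x hx i => ?_, fun x hx _ => ?_⟩
    · have h0 := hx _ (single_ir_mem_M0 i 1)
      rw [zeta_comm, zeta_single_ir, one_mul, neg_eq_zero] at h0
      exact h0
    · have : ({y | y ∈ ([] : List (Fin (2 * n) → F))} : Set _) = ∅ := by simp
      rw [this, Submodule.span_empty, Submodule.mem_bot] at hx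
      exact hx
  | cons u t ih =>
    have hl' : ∀ x ∈ t, ∀ y ∈ t, zeta F n x y = 0 :=
      fun x hx y hy => hl x (List.mem_cons_of_mem u hx) y (List.mem_cons_of_mem u hy)
    obtain ⟨M', h1, h2, h3⟩ := ih hl'
    by_cases hc : ∀ x ∈ Submodule.span F {y | y ∈ u :: t}, x ∈ M' → x = 0
    · exact ⟨M', h1, h2, hc⟩
    push_neg at hc
    obtain ⟨v, hv_span, hv_mem, hv_ne⟩ := hc
    -- write v = av • u + zv with zv ∈ span t
    have hset : ({y | y ∈ u :: t} : Set _) = insert u {y | y ∈ t} := by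
      ext y; simp [List.mem_cons]
    rw [hset] at hv_span
    obtain ⟨av, zv, hzv, hveq⟩ := Submodule.mem_span_insert.mp hv_span
    have hav : av ≠ 0 := by
      rintro rfl
      rw [zero_smul, zero_add] at hveq
      exact hv_ne (h3 v (hveq ▸ hzv) hv_mem)
    -- find a singular vector a with zeta a v = 1
    obtain ⟨a, ha_q, ha_v⟩ : ∃ a : Fin (2 * n) → F, qbar F n a = 0 ∧ zeta F n a v = 1 := by
      have : ∃ j : Fin (2 * n), v j ≠ 0 := by
        by_contra hno
        push_neg at hno
        exact hv_ne (funext hno)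
      obtain ⟨j, hj⟩ := this
      by_cases hjn : (j : ℕ) < n
      · set i : Fin n := ⟨j, hjn⟩ with hi
        have hij : il n i = j := by simp [il, hi]
        refine ⟨Pi.single (ir n i) (-(v j)⁻¹), qbar_single _ _, ?_⟩
        rw [zeta_single_ir, hij]
        field_simp
      · set i : Fin n := ⟨(j : ℕ) - n, by have := j.2; omega⟩ with hi
        have hij : ir n i = j := by simp only [ir, hi, Fin.ext_iff]; have := j.2; omega
        refine ⟨Pi.single (il n i) ((v j)⁻¹), qbar_single _ _, ?_⟩
        rw [zeta_single_il, hij]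
        field_simp
    -- define the new subspace
    set K : Submodule F (Fin (2 * n) → F) := M' ⊓ LinearMap.ker (zb F n a) with hK
    set M : Submodule F (Fin (2 * n) → F) := (Submodule.span F {a}) ⊔ K with hM
    have ha_mem : a ∈ M := Submodule.mem_sup_left (Submodule.mem_span_singleton_self a)
    have hK_le : K ≤ M := le_sup_right
    have hmemM : ∀ x ∈ M, ∃ c : F, ∃ m ∈ K, x = c • a + m := by
      intro x hx
      obtain ⟨y, hy, m, hm, rfl⟩ := Submodule.mem_sup.mp hx
      obtain ⟨c, rfl⟩ := Submodule.mem_span_singleton.mp hy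
      exact ⟨c, m, hm, rfl⟩
    have hKz : ∀ m ∈ K, zeta F n a m = 0 := fun m hm => by
      exact hm.2
    have hKq : ∀ m ∈ K, qbar F n m = 0 := fun m hm => h1 m hm.1
    refine ⟨M, ?_, ?_, ?_⟩
    · -- (i) singular
      intro x hx
      obtain ⟨c, m, hm, rfl⟩ := hmemM x hx
      rw [qbar_polar, qbar_smul, ha_q, hKq m hm, zeta_smul_left, hKz m hm]
      ring
    · -- (ii) M⊥ ≤ M
      intro x hx
      set c : F := zeta F n x v with hc
      set y : (Fin (2 * n) → F) := x + c • a with hy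
      have hya : zeta F n a y = 0 := by
        have hxa : zeta F n a x = 0 := by
          rw [zeta_comm]; exact hx a ha_mem
        rw [hy, zeta_add_right, hxa, zeta_smul_right, zeta_self, mul_zero, add_zero]
      have hyv : zeta F n y v = 0 := by
        rw [hy, zeta_add_left, zeta_smul_left, ha_v, mul_one, ← hc, CharTwo.add_self_eq_zero]
      have hyM' : y ∈ M' := by
        apply h2
        intro m' hm'
        set d : F := zeta F n a m' with hd
        have hm'' : m' + d • v ∈ K := by
          refine Submodule.mem_inf.mpr ⟨M'.add_mem hm' (M'.smul_mem d hv_mem), ?_⟩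
          show zeta F n a (m' + d • v) = 0
          rw [zeta_add_right, zeta_smul_right, ha_v, mul_one, ← hd, CharTwo.add_self_eq_zero]
        have hyK : zeta F n y (m' + d • v) = 0 := by
          have h₁ : zeta F n x (m' + d • v) = 0 := hx _ (hK_le hm'')
          rw [hy, zeta_add_left, h₁, zeta_smul_left, hKz _ hm'', mul_zero, add_zero]
        have := hyK
        rw [zeta_add_right, zeta_smul_right, hyv, mul_zero, add_zero] at this
        exact this
      have hyK : y ∈ K := Submodule.mem_inf.mpr ⟨hyM', hya⟩
      have : x = y + c • a := by
        rw [hy, add_assoc, ← add_smul, CharTwo.add_self_eq_zero, zero_smul, add_zero]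
      rw [this]
      exact M.add_mem (hK_le hyK) (M.smul_mem c ha_mem)
    · -- transversality
      intro x hx_span hxM
      obtain ⟨cx, m, hm, rfl⟩ := hmemM _ hxM
      have hx_span' := hx_span
      rw [hset] at hx_span'
      -- zeta v x = 0 since both in span of u :: t
      have hspan_iso : ∀ x' ∈ Submodule.span F {y | y ∈ u :: t},
          ∀ y' ∈ Submodule.span F {y | y ∈ u :: t}, zeta F n x' y' = 0 :=
        zeta_span_zero _ fun x' hx' y' hy' => hl x' hx' y' hy'
      have hvx : zeta F n v (cx • a + m) = 0 := by
        refine hspan_iso v ?_ _ hx_span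
        rw [hset]; exact hv_span
      have hvm : zeta F n v m = 0 := by
        rw [zeta_eq_qbar_sub, h1 _ (M'.add_mem hv_mem hm.1), h1 _ hv_mem, h1 _ hm.1]
        ring
      have hva : zeta F n v a = 1 := by rw [zeta_comm]; exact ha_v
      have hcx : cx = 0 := by
        rw [zeta_add_right, zeta_smul_right, hva, mul_one, hvm, add_zero] at hvx
        exact hvx
      rw [hcx, zero_smul, zero_add] at hxM hx_span ⊢
      -- now m ∈ M' ∩ span (u :: t); show m = 0
      rw [hset] at hx_span
      obtain ⟨s, z, hz, hmeq⟩ := Submodule.mem_span_insert.mp hx_span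
      set b : F := s * av⁻¹ with hb
      have hw : m - b • v ∈ Submodule.span F {y | y ∈ t} := by
        have : m - b • v = z - b • zv := by
          rw [hmeq, hveq, smul_add, smul_smul, hb]
          rw [mul_assoc, inv_mul_cancel₀ hav, mul_one]
          abel
        rw [this]
        exact Submodule.sub_mem _ hz (Submodule.smul_mem _ _ hzv)
      have hwM' : m - b • v ∈ M' := M'.sub_mem hm.1 (M'.smul_mem b hv_mem)
      have hw0 : m - b • v = 0 := h3 _ hw hwM'
      have hmb : m = b • v := by
        have := sub_eq_zero.mp hw0; exact this
      have hzam : zeta F n a m = 0 := hKz m hm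
      rw [hmb, zeta_smul_right, ha_v, mul_one] at hzam
      rw [hmb, hzam, zero_smul]

end Part2


section Part3

variable {F : Type} [Field F] {n : ℕ} [CharP F 2]

lemma exists_duals {k : ℕ} (v : Fin k → (Fin (2 * n) → F))
    (hv : LinearIndependent F v)
    (hiso : ∀ i j, zeta F n (v i) (v j) = 0) :
    ∃ z : Fin k → (Fin (2 * n) → F),
      (∀ j, qbar F n (z j) = 0) ∧
      (∀ i j, zeta F n (z i) (z j) = 0) ∧
      (∀ i j, zeta F n (v i) (z j) = if i = j then 1 else 0) := by
  classical
  have hlist : ∀ x ∈ List.ofFn v, ∀ y ∈ List.ofFn v, zeta F n x y = 0 := by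
    intro x hx y hy
    rw [List.mem_ofFn] at hx hy
    obtain ⟨i, rfl⟩ := hx
    obtain ⟨j, rfl⟩ := hy
    exact hiso i j
  obtain ⟨M, h1, h2, h3⟩ := lemD (List.ofFn v) hlist
  have hsetv : ({y | y ∈ List.ofFn v} : Set _) = Set.range v := by
    ext y; simp [List.mem_ofFn]
  rw [hsetv] at h3
  -- the map Φ : M → (Fin k → F)
  set Φ : M →ₗ[F] (Fin k → F) :=
    (LinearMap.pi fun j => zb F n (v j)).comp (Submodule.subtype M) with hΦ
  have hΦ_apply : ∀ (m : M) (j : Fin k), Φ m j = zeta F n (v j) (m : Fin (2 * n) → F) :=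
    fun m j => rfl
  have hsurj : Function.Surjective Φ := by
    rw [← LinearMap.range_eq_top]
    by_contra hne
    obtain ⟨f, hf0, hfmap⟩ := Submodule.exists_dual_map_eq_bot_of_lt_top
      (Ne.lt_top hne) inferInstance
    set c : Fin k → F := fun j => f (Pi.single j 1) with hcdef
    have hfc : ∀ y : Fin k → F, f y = ∑ j, y j * c j := by
      intro y
      have hy : ∀ j, (Pi.single j (y j) : Fin k → F) = y j • (Pi.single j 1 : Fin k → F) := by
        intro j
        rw [← Pi.single_smul, smul_eq_mul, mul_one]
      conv_lhs => rw [← Finset.univ_sum_single y]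
      rw [map_sum]
      refine Finset.sum_congr rfl fun j _ => ?_
      rw [hy j, map_smul, smul_eq_mul]
    have hcne : ∃ j, c j ≠ 0 := by
      by_contra hno
      push_neg at hno
      apply hf0
      refine LinearMap.ext fun y => ?_
      rw [hfc y]
      simp [hno]
    set u : Fin (2 * n) → F := ∑ j, c j • v j with hu
    have hu_perp : ∀ m ∈ M, zeta F n u m = 0 := by
      intro m hm
      have h₁ : zb F n u m = ∑ j, c j * zeta F n (v j) m := by
        rw [hu, map_sum, LinearMap.sum_apply]
        exact Finset.sum_congr rfl fun j _ => by
          rw [map_smul, LinearMap.smul_apply, smul_eq_mul, zb_apply]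
      have h₂ : f (Φ ⟨m, hm⟩) = 0 := by
        have hmem : f (Φ ⟨m, hm⟩) ∈ Submodule.map f (LinearMap.range Φ) :=
          Submodule.mem_map_of_mem (LinearMap.mem_range_self Φ ⟨m, hm⟩)
        rw [hfmap] at hmem
        exact (Submodule.mem_bot F).mp hmem
      rw [hfc] at h₂
      rw [← zb_apply, h₁, ← h₂]
      exact Finset.sum_congr rfl fun j _ => by rw [hΦ_apply]; ring
    have huM : u ∈ M := h2 u hu_perp
    have huspan : u ∈ Submodule.span F (Set.range v) :=
      Submodule.sum_mem _ fun j _ => Submodule.smul_mem _ _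
        (Submodule.subset_span (Set.mem_range_self j))
    have hu0 : u = 0 := h3 u huspan huM
    have hall := Fintype.linearIndependent_iff.mp hv c hu0
    obtain ⟨j, hj⟩ := hcne
    exact hj (hall j)
  choose m hm using fun j => hsurj (Pi.single j 1)
  refine ⟨fun j => (m j : Fin (2 * n) → F), fun j => h1 _ (m j).2, ?_, ?_⟩
  · intro i j
    rw [zeta_eq_qbar_sub, h1 _ (M.add_mem (m i).2 (m j).2), h1 _ (m i).2, h1 _ (m j).2]
    ring
  · intro i j
    have := congrFun (hm j) i
    rw [hΦ_apply] at this
    rw [this, Pi.single_apply]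

end Part3


section Part4

variable {F : Type} [Field F] {n : ℕ}

lemma incl_castLE (x : Fin (2 * n) → F) (j : Fin (2 * n)) :
    incl F n x (Fin.castLE (by omega) j) = x j :=
  (Fin.strictMono_castLE (by omega)).injective.extend_apply x (0 : Fin (2 * n + 1) → F) j

lemma incl_il (x : Fin (2 * n) → F) (i : Fin n) :
    incl F n x ⟨i.1, by have := i.2; omega⟩ = x (il n i) :=
  (Fin.strictMono_castLE (by omega)).injective.extend_apply x (0 : Fin (2 * n + 1) → F) (il n i)

lemma incl_ir (x : Fin (2 * n) → F) (i : Fin n) :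
    incl F n x ⟨n + i.1, by have := i.2; omega⟩ = x (ir n i) :=
  (Fin.strictMono_castLE (by omega)).injective.extend_apply x (0 : Fin (2 * n + 1) → F) (ir n i)

lemma incl_last (x : Fin (2 * n) → F) :
    incl F n x ⟨2 * n, by omega⟩ = 0 := by
  have hnr : ¬∃ j : Fin (2 * n), Fin.castLE (by omega : 2 * n ≤ 2 * n + 1) j
      = (⟨2 * n, by omega⟩ : Fin (2 * n + 1)) := by
    rintro ⟨j, hj⟩
    have hj' : (j : ℕ) = 2 * n := congrArg Fin.val hj
    have := j.2
    omega
  exact Function.extend_apply' x (0 : Fin (2 * n + 1) → F) _ hnr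

lemma eta_incl (x : Fin (2 * n) → F) : eta F n (incl F n x) = qbar F n x := by
  unfold eta qbar
  rw [incl_last x]
  rw [Finset.sum_congr rfl (fun i _ => by rw [incl_il x i, incl_ir x i])]
  ring

lemma incl_ker : LinearMap.ker (incl F n) = ⊥ := by
  rw [LinearMap.ker_eq_bot']
  intro x hx
  funext j
  have h := congrFun hx (Fin.castLE (by omega) j)
  rw [incl_castLE] at h
  exact h

end Part4

end Stmt3Aux

open Stmt3Aux

/-- If `char F = 2` and `1 ≤ k ≤ n`, then `W̄^sp_k ⊆ W_k°`, where `W̄^sp_k` is regarded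
inside `⋀^k V` via the inclusion `V̄ ⊆ V`. -/
theorem stmt3 (F : Type) [Field F] [CharP F 2] (n k : ℕ) (hk : 1 ≤ k) (hkn : k ≤ n) :
    Submodule.map (ExteriorAlgebra.map (incl F n)).toLinearMap (Wsp F n k) ≤ Wcirc F n k := by
  classical
  rw [Wsp]
  refine (Submodule.map_span_le _ _ _).mpr ?_
  rintro w ⟨v, hind, hspan, rfl⟩
  rw [AlgHom.toLinearMap_apply, ExteriorAlgebra.map_apply_ιMulti]
  have hij : ∀ i j, zeta F n (v i) (v j) = 0 := fun i j =>
    hspan _ (Submodule.subset_span ⟨i, rfl⟩) _ (Submodule.subset_span ⟨j, rfl⟩)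
  obtain ⟨z, hzq, hzz, hvz⟩ := exists_duals v hind hij
  set c : Fin k → F := fun i => qbar F n (v i) with hc
  set A : Fin k → (Fin (2 * n + 1) → F) := fun i => incl F n (v i + c i • z i) with hA
  set B : Fin k → (Fin (2 * n + 1) → F) := fun i => incl F n (c i • z i) with hB
  have hABfun : ⇑(incl F n) ∘ v = A + B := by
    funext i
    have h2z : c i • z i + c i • z i = 0 := by
      rw [← add_smul, CharTwo.add_self_eq_zero, zero_smul]
    show incl F n (v i) = A i + B i
    show incl F n (v i) = incl F n (v i + c i • z i) + incl F n (c i • z i)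
    rw [← map_add, add_assoc, h2z, add_zero]
  rw [hABfun]
  have hcoe : ∀ x : Fin k → (Fin (2 * n + 1) → F),
      (ExteriorAlgebra.ιMulti F k (M := Fin (2 * n + 1) → F)).toMultilinearMap x
        = ExteriorAlgebra.ιMulti F k x := fun _ => rfl
  have hexp := MultilinearMap.map_add_univ
    (ExteriorAlgebra.ιMulti F k (M := Fin (2 * n + 1) → F)).toMultilinearMap A B
  rw [← hcoe, hexp]
  refine Submodule.sum_mem _ fun s _ => ?_
  set wb : Fin k → (Fin (2 * n) → F) :=
    fun i => if i ∈ s then v i + c i • z i else c i • z i with hwb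
  have hwbs : ∀ i, i ∈ s → wb i = v i + c i • z i := fun i hi => by
    simp only [hwb]; exact if_pos hi
  have hwbn : ∀ i, i ∉ s → wb i = c i • z i := fun i hi => by
    simp only [hwb]; exact if_neg hi
  have hpw : s.piecewise A B = ⇑(incl F n) ∘ wb := by
    funext i
    by_cases h : i ∈ s
    · rw [Finset.piecewise_eq_of_mem _ _ _ h]
      show A i = incl F n (wb i)
      rw [hwbs i h]
    · rw [Finset.piecewise_eq_of_notMem _ _ _ h]
      show B i = incl F n (wb i)
      rw [hwbn i h]
  rw [hpw]
  by_cases hzero : ∃ i ∉ s, c i = 0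
  · obtain ⟨i0, hi0, hc0⟩ := hzero
    have h0 : (⇑(incl F n) ∘ wb) i0 = 0 := by
      show incl F n (wb i0) = 0
      rw [hwbn i0 hi0, hc0, zero_smul, map_zero]
    rw [MultilinearMap.map_coord_zero _ i0 h0]
    exact Submodule.zero_mem _
  · push_neg at hzero
    rw [hcoe]
    apply Submodule.subset_span
    refine ⟨⇑(incl F n) ∘ wb, ?_, ?_, rfl⟩
    · -- linear independence
      have hwind : LinearIndependent F wb := by
        rw [Fintype.linearIndependent_iff]
        intro g hg
        have hgc : ∀ j, g j * c j = 0 := by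
          intro j
          have h0 : zb F n (v j) (∑ i, g i • wb i) = 0 := by
            rw [hg, map_zero]
          rw [map_sum] at h0
          have hterm : ∀ i, zb F n (v j) (g i • wb i)
              = if i = j then g j * c j else 0 := by
            intro i
            rw [map_smul, smul_eq_mul, zb_apply]
            have hwz : zeta F n (v j) (wb i) = c i * if j = i then 1 else 0 := by
              by_cases hi : i ∈ s
              · rw [hwbs i hi, zeta_add_right, hij j i, zeta_smul_right, hvz j i, zero_add]
              · rw [hwbn i hi, zeta_smul_right, hvz j i]
            rw [hwz]
            rcases eq_or_ne i j with rfl | hij'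
            · rw [if_pos rfl, if_pos rfl]
              ring
            · rw [if_neg (fun h => hij' h.symm), if_neg hij']
              ring
          rw [Finset.sum_congr rfl fun i _ => hterm i,
            Finset.sum_ite_eq' Finset.univ j] at h0
          simpa using h0
        have hgz : ∀ i, c i ≠ 0 → g i = 0 := fun i hci =>
          (mul_eq_zero.mp (hgc i)).resolve_right hci
        have hg2 : ∑ i, (if c i = 0 then g i else 0) • v i = 0 := by
          rw [← hg]
          refine Finset.sum_congr rfl fun i _ => ?_
          by_cases hci : c i = 0
          · have his : i ∈ s := by
              by_contra hns
              exact (hzero i hns) hci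
            rw [if_pos hci, hwbs i his, hci, zero_smul, add_zero]
          · rw [if_neg hci, hgz i hci, zero_smul, zero_smul]
        have hall := Fintype.linearIndependent_iff.mp hind _ hg2
        intro i
        by_cases hci : c i = 0
        · have hi := hall i
          rwa [if_pos hci] at hi
        · exact hgz i hci
      exact hwind.map' (incl F n) incl_ker
    · -- total singularity
      intro x hx
      rw [Set.range_comp, Submodule.span_image] at hx
      obtain ⟨y, hy, rfl⟩ := hx
      rw [eta_incl]
      refine qbar_span_zero wb ?_ ?_ y hy
      · intro i
        by_cases hi : i ∈ s
        · rw [hwbs i hi, qbar_polar, qbar_smul, hzq i, zeta_smul_right,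
            hvz i i, if_pos rfl, mul_zero, add_zero, mul_one]
          exact CharTwo.add_self_eq_zero _
        · rw [hwbn i hi, qbar_smul, hzq i, mul_zero]
      · intro i j
        rcases eq_or_ne i j with rfl | hij'
        · exact zeta_self _
        · have zvz : zeta F n (v i) (z j) = 0 := by rw [hvz i j, if_neg hij']
          have zzv : zeta F n (z i) (v j) = 0 := by
            rw [zeta_comm, hvz j i, if_neg (Ne.symm hij')]
          have hi' : wb i = v i + c i • z i ∨ wb i = c i • z i := by
            by_cases hi : i ∈ s
            · exact Or.inl (hwbs i hi)
            · exact Or.inr (hwbn i hi)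
          have hj' : wb j = v j + c j • z j ∨ wb j = c j • z j := by
            by_cases hj : j ∈ s
            · exact Or.inl (hwbs j hj)
            · exact Or.inr (hwbn j hj)
          rcases hi' with h1 | h1 <;> rcases hj' with h2 | h2 <;> rw [h1, h2] <;>
            simp only [zeta_add_left, zeta_add_right, zeta_smul_left, zeta_smul_right,
              hij i j, zvz, zzv, hzz i j, mul_zero, add_zero, zero_add] <;>
            ring

end
end

section
/- Let F be a perfect field of characteristic 2 and 2 ≤ k ≤ n. Then N̄_k = { w ∧ e_{2n+1} : w ∈ W̄^sp_{k−1} }, where W̄^sp_{k−1} ⊆ ⋀^{k−1} V̄ is regarded as a subspace of ⋀^{k−1} V via the inclusion V̄ ⊆ V. In particular the linear map w ↦ w ∧ e_{2n+1} restricts to an isomorphism of F-vector spaces from W̄^sp_{k−1} onto N̄_k. -/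
open ExteriorAlgebra

noncomputable section

/-- The vector `e_{2n+1}` spanning the nucleus of `η` (0-based index `2n`). -/
def eVec (F : Type) [Field F] (n : ℕ) : Fin (2 * n + 1) → F :=
  Pi.single (⟨2 * n, by omega⟩ : Fin (2 * n + 1)) 1

/-- The nucleus subspace `N̄_k`: the span of the vectors `x_1 ∧ ⋯ ∧ x_{k−1} ∧ e_{2n+1}`
where `x_1, …, x_{k−1}` is a basis of a totally singular `(k−1)`-dimensional subspace. -/
def Nbar (F : Type) [Field F] (n k : ℕ) :
    Submodule F (ExteriorAlgebra F (Fin (2 * n + 1) → F)) :=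
  Submodule.span F {w | ∃ v : Fin (k - 1) → (Fin (2 * n + 1) → F),
    LinearIndependent F v ∧
    (∀ x ∈ Submodule.span F (Set.range v), eta F n x = 0) ∧
    w = ExteriorAlgebra.ιMulti F (k - 1) v * ExteriorAlgebra.ι F (eVec F n)}

namespace Stmt9Aux

variable {F : Type} [Field F] {n : ℕ}

/-- truncation `F^{2n+1} → F^{2n}` -/
def trunc (F : Type) [Field F] (n : ℕ) : (Fin (2 * n + 1) → F) →ₗ[F] (Fin (2 * n) → F) :=
  LinearMap.funLeft F F (Fin.castLE (by omega))

lemma trunc_apply (x : Fin (2 * n + 1) → F) (j : Fin (2 * n)) :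
    trunc F n x j = x ⟨j.1, by omega⟩ := rfl

lemma incl_apply_lt (x : Fin (2 * n) → F) (j : Fin (2 * n + 1)) (h : (j : ℕ) < 2 * n) :
    incl F n x j = x ⟨j.1, h⟩ := by
  simp only [incl, Function.ExtendByZero.linearMap_apply]
  exact Function.Injective.extend_apply (Fin.strictMono_castLE (by omega)).injective x 0 ⟨j.1, h⟩

lemma incl_apply_last (x : Fin (2 * n) → F) (j : Fin (2 * n + 1)) (h : ¬ (j : ℕ) < 2 * n) :
    incl F n x j = 0 := by
  simp only [incl, Function.ExtendByZero.linearMap_apply]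
  refine Function.extend_apply' _ _ _ ?_
  rintro ⟨a, rfl⟩
  exact h (by simpa using a.2)

lemma eVec_apply_lt (j : Fin (2 * n + 1)) (h : (j : ℕ) < 2 * n) : eVec F n j = 0 := by
  rw [eVec]
  exact Pi.single_eq_of_ne (fun hq => Nat.ne_of_lt h (congrArg Fin.val hq)) 1

lemma eVec_apply_lt' (j : ℕ) (h : j < 2 * n) : eVec F n ⟨j, by omega⟩ = 0 :=
  eVec_apply_lt _ h

lemma trunc_incl (x : Fin (2 * n) → F) : trunc F n (incl F n x) = x := by
  funext j
  rw [trunc_apply, incl_apply_lt x _ j.2]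

lemma trunc_eVec : trunc F n (eVec F n) = 0 := by
  funext j
  rw [trunc_apply]
  exact eVec_apply_lt _ j.2

lemma decomp (x : Fin (2 * n + 1) → F) :
    x = incl F n (trunc F n x) + x ⟨2 * n, by omega⟩ • eVec F n := by
  funext j
  by_cases h : (j : ℕ) < 2 * n
  · simp only [Pi.add_apply, Pi.smul_apply, smul_eq_mul]
    rw [incl_apply_lt _ _ h, eVec_apply_lt _ h, trunc_apply]
    simp
  · have hlt := j.isLt
    have hj : j = ⟨2 * n, by omega⟩ := Fin.ext (show (j : ℕ) = 2 * n by omega)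
    rw [hj]
    simp only [Pi.add_apply, Pi.smul_apply, smul_eq_mul]
    rw [incl_apply_last _ _ (by exact lt_irrefl _), eVec, Pi.single_eq_same, mul_one, zero_add]

lemma eta_eVec : eta F n (eVec F n) = 1 := by
  rw [eta]
  have h1 : ∀ i : Fin n, eVec F n ⟨i.1, by have := i.2; omega⟩
      * eVec F n ⟨n + i.1, by have := i.2; omega⟩ = 0 := by
    intro i
    have := i.2
    rw [eVec_apply_lt' i.1 (by omega), zero_mul]
  rw [Finset.sum_congr rfl fun i _ => h1 i]
  simp [eVec]

lemma eta_smul (c : F) (x : Fin (2 * n + 1) → F) : eta F n (c • x) = c ^ 2 * eta F n x := by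
  simp only [eta, Pi.smul_apply, smul_eq_mul, Finset.mul_sum, mul_add]
  congr 1
  · exact Finset.sum_congr rfl fun i _ => by ring
  · ring

lemma eta_add [CharP F 2] (z w : Fin (2 * n + 1) → F) :
    eta F n (z + w) = eta F n z + eta F n w + zeta F n (trunc F n z) (trunc F n w) := by
  have h2 : (2 : F) = 0 := by
    have := CharP.cast_eq_zero F 2
    simpa using this
  simp only [eta, zeta, Pi.add_apply, trunc_apply]
  have hsum : (∑ i : Fin n, (z ⟨i.1, by have := i.2; omega⟩ + w ⟨i.1, by have := i.2; omega⟩) *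
      (z ⟨n + i.1, by have := i.2; omega⟩ + w ⟨n + i.1, by have := i.2; omega⟩)) =
      (∑ i : Fin n, z ⟨i.1, by have := i.2; omega⟩ * z ⟨n + i.1, by have := i.2; omega⟩) +
      (∑ i : Fin n, w ⟨i.1, by have := i.2; omega⟩ * w ⟨n + i.1, by have := i.2; omega⟩) +
      ∑ i : Fin n, (z ⟨i.1, by have := i.2; omega⟩ * w ⟨n + i.1, by have := i.2; omega⟩
        - z ⟨n + i.1, by have := i.2; omega⟩ * w ⟨i.1, by have := i.2; omega⟩) := by
    rw [← Finset.sum_add_distrib, ← Finset.sum_add_distrib]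
    refine Finset.sum_congr rfl fun i _ => ?_
    linear_combination (z ⟨n + i.1, by have := i.2; omega⟩ * w ⟨i.1, by have := i.2; omega⟩) * h2
  have hsq : (z ⟨2 * n, by omega⟩ + w ⟨2 * n, by omega⟩) ^ 2 =
      z ⟨2 * n, by omega⟩ ^ 2 + w ⟨2 * n, by omega⟩ ^ 2 := by
    linear_combination (z ⟨2 * n, by omega⟩ * w ⟨2 * n, by omega⟩) * h2
  rw [hsum, hsq]
  ring

lemma zeta_add_left (x x' y : Fin (2 * n) → F) :
    zeta F n (x + x') y = zeta F n x y + zeta F n x' y := by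
  simp only [zeta, Pi.add_apply, ← Finset.sum_add_distrib]
  exact Finset.sum_congr rfl fun i _ => by ring

lemma zeta_smul_left (c : F) (x y : Fin (2 * n) → F) :
    zeta F n (c • x) y = c * zeta F n x y := by
  simp only [zeta, Pi.smul_apply, smul_eq_mul, Finset.mul_sum]
  exact Finset.sum_congr rfl fun i _ => by ring

lemma zeta_add_right (x y y' : Fin (2 * n) → F) :
    zeta F n x (y + y') = zeta F n x y + zeta F n x y' := by
  simp only [zeta, Pi.add_apply, ← Finset.sum_add_distrib]
  exact Finset.sum_congr rfl fun i _ => by ring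

lemma zeta_smul_right (c : F) (x y : Fin (2 * n) → F) :
    zeta F n x (c • y) = c * zeta F n x y := by
  simp only [zeta, Pi.smul_apply, smul_eq_mul, Finset.mul_sum]
  exact Finset.sum_congr rfl fun i _ => by ring

lemma zeta_zero_right (x : Fin (2 * n) → F) : zeta F n x 0 = 0 := by
  simp [zeta]

lemma zeta_span_right {m : ℕ} (u : Fin m → (Fin (2 * n) → F)) (x : Fin (2 * n) → F)
    (h : ∀ j, zeta F n x (u j) = 0) :
    ∀ y ∈ Submodule.span F (Set.range u), zeta F n x y = 0 := by
  intro y hy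
  induction hy using Submodule.span_induction with
  | mem y hy => obtain ⟨j, rfl⟩ := hy; exact h j
  | zero => exact zeta_zero_right x
  | add a b _ _ ha hb => rw [zeta_add_right, ha, hb, add_zero]
  | smul c a _ ha => rw [zeta_smul_right, ha, mul_zero]

lemma zeta_span {m : ℕ} (u : Fin m → (Fin (2 * n) → F))
    (h : ∀ i j, zeta F n (u i) (u j) = 0) :
    ∀ x ∈ Submodule.span F (Set.range u), ∀ y ∈ Submodule.span F (Set.range u),
      zeta F n x y = 0 := by
  intro x hx
  induction hx using Submodule.span_induction with
  | mem x hx => obtain ⟨i, rfl⟩ := hx; exact zeta_span_right u (u i) (h i)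
  | zero => intro y hy; simp [zeta]
  | add a b _ _ ha hb => intro y hy; rw [zeta_add_left, ha y hy, hb y hy, add_zero]
  | smul c a _ ha => intro y hy; rw [zeta_smul_left, ha y hy, mul_zero]

lemma eta_span [CharP F 2] {m : ℕ} (x : Fin m → (Fin (2 * n + 1) → F))
    (h0 : ∀ i, eta F n (x i) = 0)
    (hB : ∀ i j, zeta F n (trunc F n (x i)) (trunc F n (x j)) = 0) :
    ∀ z ∈ Submodule.span F (Set.range x), eta F n z = 0 := by
  have hz : ∀ a ∈ Submodule.span F (Set.range (⇑(trunc F n) ∘ x)),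
      ∀ b ∈ Submodule.span F (Set.range (⇑(trunc F n) ∘ x)), zeta F n a b = 0 :=
    zeta_span _ (fun i j => hB i j)
  have hmap : ∀ z ∈ Submodule.span F (Set.range x),
      trunc F n z ∈ Submodule.span F (Set.range (⇑(trunc F n) ∘ x)) := by
    intro z hzz
    rw [Set.range_comp, ← Submodule.map_span]
    exact Submodule.mem_map_of_mem hzz
  intro z hz'
  induction hz' using Submodule.span_induction with
  | mem z hzm => obtain ⟨i, rfl⟩ := hzm; exact h0 i
  | zero => simp [eta]
  | add a b ha hb pa pb =>
      rw [eta_add, pa, pb, hz _ (hmap a ha) _ (hmap b hb), add_zero, add_zero]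
  | smul c a _ pa => rw [eta_smul, pa, mul_zero]

lemma iota_e_prod (e : Fin (2 * n + 1) → F) :
    ∀ L : List (Fin (2 * n + 1) → F),
      ExteriorAlgebra.ι F e * ((L.map (ExteriorAlgebra.ι F)).prod * ExteriorAlgebra.ι F e) = 0
  | [] => by simp [ExteriorAlgebra.ι_sq_zero]
  | a :: L => by
    have hswap : ExteriorAlgebra.ι F e * ExteriorAlgebra.ι F a
        = -(ExteriorAlgebra.ι F a * ExteriorAlgebra.ι F e) :=
      eq_neg_of_add_eq_zero_left (ExteriorAlgebra.ι_add_mul_swap e a)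
    rw [List.map_cons, List.prod_cons, mul_assoc (ExteriorAlgebra.ι F a),
      ← mul_assoc (ExteriorAlgebra.ι F e), hswap, neg_mul, mul_assoc,
      iota_e_prod e L, mul_zero, neg_zero]

lemma prod_add_smul_aux (e : Fin (2 * n + 1) → F) :
    ∀ (m : ℕ) (u : Fin m → (Fin (2 * n + 1) → F)) (c : Fin m → F),
      (List.ofFn fun i => ExteriorAlgebra.ι F (u i + c i • e)).prod * ExteriorAlgebra.ι F e
        = (List.ofFn fun i => ExteriorAlgebra.ι F (u i)).prod * ExteriorAlgebra.ι F e := by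
  intro m
  induction m with
  | zero => intro u c; rfl
  | succ m ih =>
    intro u c
    simp only [List.ofFn_succ, List.prod_cons]
    have hrest := ih (fun i => u i.succ) (fun i => c i.succ)
    have hzero := iota_e_prod (n := n) e (List.ofFn fun i => u i.succ)
    rw [List.map_ofFn] at hzero
    simp only [Function.comp_def] at hzero
    calc ExteriorAlgebra.ι F (u 0 + c 0 • e)
          * (List.ofFn fun i => ExteriorAlgebra.ι F (u i.succ + c i.succ • e)).prod
          * ExteriorAlgebra.ι F e
        = ExteriorAlgebra.ι F (u 0 + c 0 • e)
          * ((List.ofFn fun i => ExteriorAlgebra.ι F (u i.succ)).prod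
            * ExteriorAlgebra.ι F e) := by rw [mul_assoc, hrest]
      _ = ExteriorAlgebra.ι F (u 0)
            * ((List.ofFn fun i => ExteriorAlgebra.ι F (u i.succ)).prod
              * ExteriorAlgebra.ι F e)
          + c 0 • (ExteriorAlgebra.ι F e
            * ((List.ofFn fun i => ExteriorAlgebra.ι F (u i.succ)).prod
              * ExteriorAlgebra.ι F e)) := by
            rw [map_add, map_smul, add_mul, smul_mul_assoc]
      _ = ExteriorAlgebra.ι F (u 0)
            * (List.ofFn fun i => ExteriorAlgebra.ι F (u i.succ)).prod
            * ExteriorAlgebra.ι F e := by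
            rw [hzero, smul_zero, add_zero, mul_assoc]

lemma prod_add_smul (e : Fin (2 * n + 1) → F) (m : ℕ)
    (u : Fin m → (Fin (2 * n + 1) → F)) (c : Fin m → F) :
    ExteriorAlgebra.ιMulti F m (fun i => u i + c i • e) * ExteriorAlgebra.ι F e
      = ExteriorAlgebra.ιMulti F m u * ExteriorAlgebra.ι F e := by
  rw [ExteriorAlgebra.ιMulti_apply, ExteriorAlgebra.ιMulti_apply]
  exact prod_add_smul_aux e m u c

/-- The dual functional reading off the last coordinate. -/
def dl (F : Type) [Field F] (n : ℕ) : Module.Dual F (Fin (2 * n + 1) → F) :=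
  LinearMap.proj ⟨2 * n, by omega⟩

lemma dl_eVec : dl F n (eVec F n) = 1 := Pi.single_eq_same _ 1

lemma dl_incl (x : Fin (2 * n) → F) : dl F n (incl F n x) = 0 :=
  incl_apply_last x _ (lt_irrefl _)

lemma ctr_map_incl (x : ExteriorAlgebra F (Fin (2 * n) → F)) :
    CliffordAlgebra.contractRight
      ((ExteriorAlgebra.map (incl F n)).toLinearMap x) (dl F n) = 0 := by
  set P : Submodule F (ExteriorAlgebra F (Fin (2 * n + 1) → F)) :=
    Submodule.span F {w | ∃ L : List (Fin (2 * n) → F),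
      w = (L.map (fun a => ExteriorAlgebra.ι F (incl F n a))).prod} with hPdef
  have hgen : ∀ L : List (Fin (2 * n) → F),
      CliffordAlgebra.contractRight
        ((L.map (fun a => ExteriorAlgebra.ι F (incl F n a))).prod) (dl F n) = 0 := by
    intro L
    induction L using List.reverseRecOn with
    | nil => simpa using CliffordAlgebra.contractRight_one 0 (dl F n)
    | append_singleton L a ih =>
        rw [List.map_append, List.prod_append, List.map_singleton, List.prod_singleton,
          CliffordAlgebra.contractRight_mul_ι, ih, dl_incl, zero_smul, zero_mul, sub_zero]
  have hP : ∀ w ∈ P, CliffordAlgebra.contractRight w (dl F n) = 0 := by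
    intro w hw
    induction hw using Submodule.span_induction with
    | mem w hw => obtain ⟨L, rfl⟩ := hw; exact hgen L
    | zero => simp
    | add a b _ _ ha hb => rw [map_add, LinearMap.add_apply, ha, hb, add_zero]
    | smul c a _ ha => rw [map_smul, LinearMap.smul_apply, ha, smul_zero]
  apply hP
  have hmulP : P * P ≤ P := by
    rw [hPdef, Submodule.span_mul_span]
    refine Submodule.span_le.2 ?_
    rintro _ ⟨_, ⟨L1, rfl⟩, _, ⟨L2, rfl⟩, rfl⟩
    exact Submodule.subset_span ⟨L1 ++ L2, by rw [List.map_append, List.prod_append]⟩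
  induction x using CliffordAlgebra.induction with
  | algebraMap r =>
      rw [AlgHom.toLinearMap_apply, AlgHom.commutes, Algebra.algebraMap_eq_smul_one]
      exact Submodule.smul_mem _ _ (Submodule.subset_span ⟨[], rfl⟩)
  | ι m =>
      rw [AlgHom.toLinearMap_apply]
      exact Submodule.subset_span ⟨[m], by simp⟩
  | mul a b ha hb =>
      rw [AlgHom.toLinearMap_apply, map_mul]
      exact hmulP (Submodule.mul_mem_mul ha hb)
  | add a b ha hb =>
      rw [AlgHom.toLinearMap_apply, map_add]
      exact Submodule.add_mem _ ha hb

lemma map_incl_eq_zero (w : ExteriorAlgebra F (Fin (2 * n) → F))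
    (h : (ExteriorAlgebra.map (incl F n)).toLinearMap w * ExteriorAlgebra.ι F (eVec F n) = 0) :
    (ExteriorAlgebra.map (incl F n)).toLinearMap w = 0 := by
  have h1 := CliffordAlgebra.contractRight_mul_ι (Q := (0 : QuadraticForm F (Fin (2 * n + 1) → F)))
    (d := dl F n) (eVec F n) ((ExteriorAlgebra.map (incl F n)).toLinearMap w)
  rw [h, ctr_map_incl, dl_eVec, zero_mul, sub_zero, one_smul] at h1
  rw [← h1]
  simp

lemma exists_sqrt [CharP F 2] [PerfectField F] (a : F) : ∃ c : F, c ^ 2 = a := by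
  haveI : Fact (Nat.Prime 2) := ⟨Nat.prime_two⟩
  exact ⟨(frobeniusEquiv F 2).symm a, by
    rw [← frobeniusEquiv_def F 2]
    exact (frobeniusEquiv F 2).apply_symm_apply a⟩

end Stmt9Aux

/-- Let `F` be a perfect field with `char F = 2` and `2 ≤ k ≤ n`. Then
`N̄_k = {w ∧ e_{2n+1} : w ∈ W̄^sp_{k−1}}` (with `W̄^sp_{k−1}` regarded inside `⋀^{k−1} V`
via the inclusion `V̄ ⊆ V`), and the map `w ↦ w ∧ e_{2n+1}` restricts to an isomorphism
(in particular an injection) from `W̄^sp_{k−1}` onto `N̄_k`. -/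
theorem stmt9 (F : Type) [Field F] [CharP F 2] [PerfectField F] (n k : ℕ)
    (hk : 2 ≤ k) (hkn : k ≤ n) :
    Nbar F n k = Submodule.map (LinearMap.mulRight F (ExteriorAlgebra.ι F (eVec F n)))
        (Submodule.map (ExteriorAlgebra.map (incl F n)).toLinearMap (Wsp F n (k - 1))) ∧
    Set.InjOn (LinearMap.mulRight F (ExteriorAlgebra.ι F (eVec F n)))
      (Submodule.map (ExteriorAlgebra.map (incl F n)).toLinearMap (Wsp F n (k - 1))) := by
  open Stmt9Aux in
  constructor
  · apply le_antisymm
    · rw [Nbar, Submodule.span_le]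
      rintro w ⟨v, hind, hsing, rfl⟩
      set vb : Fin (k - 1) → (Fin (2 * n) → F) := fun i => trunc F n (v i) with hvb
      have hdisj : Disjoint (Submodule.span F (Set.range v)) (LinearMap.ker (trunc F n)) := by
        rw [Submodule.disjoint_def]
        intro x hx hker
        have hk0 : trunc F n x = 0 := LinearMap.mem_ker.mp hker
        have hde := decomp (F := F) (n := n) x
        rw [hk0, map_zero, zero_add] at hde
        have hx2 : eta F n x = x ⟨2 * n, by omega⟩ ^ 2 := by
          conv_lhs => rw [hde]
          rw [eta_smul, eta_eVec, mul_one]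
        have hxl : x ⟨2 * n, by omega⟩ = 0 := by
          have := hsing x hx
          rw [hx2] at this
          exact pow_eq_zero_iff (n := 2) (by norm_num) |>.mp this
        rw [hde, hxl, zero_smul]
      have hindb : LinearIndependent F vb := hind.map hdisj
      have hiso : ∀ a ∈ Submodule.span F (Set.range vb),
          ∀ b ∈ Submodule.span F (Set.range vb), zeta F n a b = 0 := by
        apply zeta_span
        intro i j
        have hadd := eta_add (F := F) (n := n) (v i) (v j)
        rw [hsing (v i + v j) (Submodule.add_mem _ (Submodule.subset_span ⟨i, rfl⟩)
            (Submodule.subset_span ⟨j, rfl⟩)),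
          hsing (v i) (Submodule.subset_span ⟨i, rfl⟩),
          hsing (v j) (Submodule.subset_span ⟨j, rfl⟩), zero_add, zero_add] at hadd
        exact hadd.symm
      have hval : ExteriorAlgebra.ιMulti F (k - 1) v * ExteriorAlgebra.ι F (eVec F n)
          = (ExteriorAlgebra.map (incl F n)) (ExteriorAlgebra.ιMulti F (k - 1) vb)
            * ExteriorAlgebra.ι F (eVec F n) := by
        rw [ExteriorAlgebra.map_apply_ιMulti]
        have h1 : v = fun i => (⇑(incl F n) ∘ vb) i
            + (fun i => v i ⟨2 * n, by omega⟩) i • eVec F n := by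
          funext i
          exact decomp (v i)
        conv_lhs => rw [h1]
        exact prod_add_smul (eVec F n) (k - 1) (⇑(incl F n) ∘ vb) _
      rw [hval]
      exact Submodule.mem_map_of_mem (Submodule.mem_map_of_mem
        (Submodule.subset_span ⟨vb, hindb, hiso, rfl⟩))
    · rw [Wsp, Submodule.map_span, Submodule.map_span, Submodule.span_le]
      rintro _ ⟨_, ⟨_, ⟨u, hind, hiso, rfl⟩, rfl⟩, rfl⟩
      choose c hc using fun i => exists_sqrt (F := F) (eta F n (incl F n (u i)))
      set x : Fin (k - 1) → (Fin (2 * n + 1) → F) :=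
        fun i => incl F n (u i) + c i • eVec F n with hx
      have htx : ∀ i, trunc F n (x i) = u i := by
        intro i
        rw [hx]
        simp only [map_add, map_smul, trunc_incl, trunc_eVec, smul_zero, add_zero]
      have hindx : LinearIndependent F x := by
        refine LinearIndependent.of_comp (trunc F n) ?_
        rw [show ⇑(trunc F n) ∘ x = u from funext htx]
        exact hind
      have h0 : ∀ i, eta F n (x i) = 0 := by
        intro i
        rw [show x i = incl F n (u i) + c i • eVec F n from rfl, eta_add, eta_smul, eta_eVec,
          mul_one, hc i, map_smul, trunc_eVec, smul_zero, zeta_zero_right, add_zero]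
        exact CharTwo.add_self_eq_zero _
      have hBx : ∀ i j, zeta F n (trunc F n (x i)) (trunc F n (x j)) = 0 := by
        intro i j
        rw [htx, htx]
        exact hiso _ (Submodule.subset_span ⟨i, rfl⟩) _ (Submodule.subset_span ⟨j, rfl⟩)
      have hsing := eta_span x h0 hBx
      have hval : (LinearMap.mulRight F (ExteriorAlgebra.ι F (eVec F n)))
            ((ExteriorAlgebra.map (incl F n)).toLinearMap (ExteriorAlgebra.ιMulti F (k - 1) u))
          = ExteriorAlgebra.ιMulti F (k - 1) x * ExteriorAlgebra.ι F (eVec F n) := by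
        rw [LinearMap.mulRight_apply, AlgHom.toLinearMap_apply,
          ExteriorAlgebra.map_apply_ιMulti]
        exact (prod_add_smul (eVec F n) (k - 1) (⇑(incl F n) ∘ u) c).symm
      exact Submodule.subset_span ⟨x, hindx, hsing, hval⟩
  · intro a ha b hb hab
    obtain ⟨a', _, rfl⟩ := ha
    obtain ⟨b', _, rfl⟩ := hb
    have hsub : (ExteriorAlgebra.map (incl F n)).toLinearMap (a' - b')
        * ExteriorAlgebra.ι F (eVec F n) = 0 := by
      rw [map_sub, sub_mul]
      have := hab
      simp only [LinearMap.mulRight_apply] at this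
      rw [this, sub_self]
    have := map_incl_eq_zero (a' - b') hsub
    rw [map_sub] at this
    have h2 := sub_eq_zero.mp this
    exact h2

end
end
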